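/- Let d, c, b > 0 with c ≥ 6b, and define a(t) = d/(c+t)^b for t ≥ 0, so that |a'(t)| = bd/(c+t)^{b+1}. Let F : H → H be a monotone operator, f_δ ∈ H, and let V_δ : [0,∞) → H satisfy F(V_δ(t)) + a(t)V_δ(t) = f_δ for all t ≥ 0. Then for every t ≥ 0: e^{−t/2}·∫_0^t e^{s/2}|a'(s)|·‖V_δ(s)‖ ds ≤ (1/2)·a(t)‖V_δ(t)‖. -/

import Mathlib

open scoped RealInnerProductSpace

theorem stmt13 {H : Type*} [NormedAddCommGroup H] [InnerProductSpace ℝ H]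
    (d c b : ℝ) (hd : 0 < d) (hc : 0 < c) (hb : 0 < b) (hcb : 6 * b ≤ c)
    (F : H → H) (hF : ∀ u v : H, 0 ≤ ⟪F u - F v, u - v⟫)
    (fδ : H) (V : ℝ → H)
    (hV : ∀ t : ℝ, 0 ≤ t → F (V t) + (d / (c + t) ^ b) • V t = fδ) :
    ∀ t : ℝ, 0 ≤ t →
      Real.exp (-t / 2) *
          (∫ s in (0:ℝ)..t, Real.exp (s / 2) * (b * d / (c + s) ^ (b + 1)) * ‖V s‖) ≤
        1 / 2 * (d / (c + t) ^ b) * ‖V t‖ := by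
  intro t ht
  have hct : (0:ℝ) < c + t := by linarith
  have hctb : (0:ℝ) < (c + t) ^ b := Real.rpow_pos_of_pos hct b
  -- Step 1: monotonicity of ‖V s‖
  have hmono : ∀ s : ℝ, 0 ≤ s → s ≤ t → ‖V s‖ ≤ ‖V t‖ := by
    intro s hs hst
    have hcs : (0:ℝ) < c + s := by linarith
    set α : ℝ := d / (c + s) ^ b with hα
    set β : ℝ := d / (c + t) ^ b with hβ
    have hαpos : 0 < α := div_pos hd (Real.rpow_pos_of_pos hcs b)
    have hβpos : 0 < β := div_pos hd hctb
    have hβα : β ≤ α := by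
      apply div_le_div_of_nonneg_left hd.le (Real.rpow_pos_of_pos hcs b)
      exact Real.rpow_le_rpow hcs.le (by linarith) hb.le
    have hFs : F (V s) = fδ - α • V s := by
      have := hV s hs; rw [← this]; abel
    have hFt : F (V t) = fδ - β • V t := by
      have := hV t ht; rw [← this]; abel
    have key := hF (V s) (V t)
    rw [hFs, hFt] at key
    have hexp : ⟪(fδ - α • V s) - (fδ - β • V t), V s - V t⟫ =
        (α + β) * ⟪V s, V t⟫ - α * ‖V s‖^2 - β * ‖V t‖^2 := by
      simp only [inner_sub_left, inner_sub_right, real_inner_smul_left,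
        real_inner_self_eq_norm_sq, real_inner_comm (V t) (V s)]
      ring
    rw [hexp] at key
    have hip : ⟪V s, V t⟫ ≤ ‖V s‖ * ‖V t‖ := real_inner_le_norm _ _
    have h1 : α * ‖V s‖^2 + β * ‖V t‖^2 ≤ (α + β) * (‖V s‖ * ‖V t‖) := by
      nlinarith [key, hip, hαpos, hβpos]
    by_contra hcon
    push_neg at hcon
    have hxy : 0 < ‖V s‖ - ‖V t‖ := by linarith
    nlinarith [h1, mul_pos hβpos (mul_pos hxy hxy),
      mul_nonneg (mul_nonneg (sub_nonneg.2 hβα) (norm_nonneg (V s))) hxy.le]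
  -- Step 2: FTC bound
  set g : ℝ → ℝ := fun s => Real.exp (s / 2) * (c + s) ^ (-b) with hg
  set g' : ℝ → ℝ := fun s =>
    Real.exp (s / 2) * (1 / 2) * (c + s) ^ (-b) +
      Real.exp (s / 2) * (-b * (c + s) ^ (-b - 1)) with hg'
  have hderiv : ∀ s ∈ Set.uIcc (0:ℝ) t, HasDerivAt g (g' s) s := by
    intro s hs
    rw [Set.uIcc_of_le ht] at hs
    have hcs : (0:ℝ) < c + s := by have := hs.1; linarith
    have h1 : HasDerivAt (fun s : ℝ => Real.exp (s / 2)) (Real.exp (s / 2) * (1 / 2)) s := by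
      have := (Real.hasDerivAt_exp (s / 2)).comp s ((hasDerivAt_id s).div_const 2)
      exact this
    have h2 : HasDerivAt (fun s : ℝ => (c + s) ^ (-b)) (1 * -b * (c + s) ^ (-b - 1)) s := by
      exact (HasDerivAt.const_add c (hasDerivAt_id s)).rpow_const (Or.inl hcs.ne')
    have H : HasDerivAt (fun s => Real.exp (s / 2) * (c + s) ^ (-b)) _ s := h1.mul h2
    simp only [hg, hg']
    convert H using 1
    ring
  have hcontg' : ContinuousOn g' (Set.uIcc 0 t) := by
    rw [Set.uIcc_of_le ht]
    apply ContinuousOn.add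
    · exact ((Real.continuous_exp.comp (continuous_id.div_const 2)).continuousOn.mul
        continuousOn_const).mul ((continuousOn_const.add continuousOn_id).rpow_const
        (fun x hx => Or.inl (by have := hx.1; show c + x ≠ 0; positivity)))
    · exact (Real.continuous_exp.comp (continuous_id.div_const 2)).continuousOn.mul
        (continuousOn_const.mul ((continuousOn_const.add continuousOn_id).rpow_const
        (fun x hx => Or.inl (by have := hx.1; show c + x ≠ 0; positivity))))
  have hintg' : IntervalIntegrable g' MeasureTheory.volume 0 t :=
    hcontg'.intervalIntegrable
  have hftc : (∫ s in (0:ℝ)..t, g' s) = g t - g 0 :=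
    intervalIntegral.integral_eq_sub_of_hasDerivAt hderiv hintg'
  -- the comparison function
  set G : ℝ → ℝ := fun s => Real.exp (s / 2) * (b * d / (c + s) ^ (b + 1)) * ‖V t‖ with hG
  have hcontG : ContinuousOn G (Set.uIcc 0 t) := by
    rw [Set.uIcc_of_le ht]
    apply ContinuousOn.mul _ continuousOn_const
    apply ContinuousOn.mul
      (Real.continuous_exp.comp (continuous_id.div_const 2)).continuousOn
    apply ContinuousOn.div continuousOn_const
      ((continuousOn_const.add continuousOn_id).rpow_const
        (fun x hx => Or.inl (by have := hx.1; show c + x ≠ 0; positivity)))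
    intro x hx
    have : (0:ℝ) < c + x := by have := hx.1; linarith
    positivity
  have hintG : IntervalIntegrable G MeasureTheory.volume 0 t :=
    hcontG.intervalIntegrable
  -- pointwise: 2 * G s ≤ d * ‖V t‖ * g' s
  have hptw : ∀ s ∈ Set.Icc (0:ℝ) t, G s ≤ d * ‖V t‖ * ((1/2) * g' s) := by
    intro s hs
    have hcs : (0:ℝ) < c + s := by have := hs.1; linarith
    have hpow : (c + s) ^ (b + 1) = (c + s) ^ b * (c + s) := by
      rw [Real.rpow_add hcs, Real.rpow_one]
    have hneg : (c + s) ^ (-b) = ((c + s) ^ b)⁻¹ := Real.rpow_neg hcs.le b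
    have hneg1 : (c + s) ^ (-b - 1) = ((c + s) ^ b * (c + s))⁻¹ := by
      rw [show -b - 1 = -(b + 1) by ring, Real.rpow_neg hcs.le, hpow]
    have hbc : 6 * b ≤ c + s := by have := hs.1; linarith
    have hE : 0 < Real.exp (s / 2) := Real.exp_pos _
    have hP : (0:ℝ) < (c + s) ^ b := Real.rpow_pos_of_pos hcs b
    have hVt : 0 ≤ ‖V t‖ := norm_nonneg _
    simp only [hG, hg', hpow, hneg, hneg1]
    rw [← sub_nonneg]
    have hexpand : d * ‖V t‖ * ((1/2) * (Real.exp (s / 2) * (1 / 2) * ((c + s) ^ b)⁻¹ +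
          Real.exp (s / 2) * (-b * ((c + s) ^ b * (c + s))⁻¹))) -
        Real.exp (s / 2) * (b * d / ((c + s) ^ b * (c + s))) * ‖V t‖ =
        d * ‖V t‖ * Real.exp (s / 2) * ((c + s) ^ b)⁻¹ * (c + s)⁻¹ *
          ((c + s) / 4 - (3/2) * b) := by
      field_simp
      ring
    rw [hexpand]
    have h9 : 0 ≤ (c + s) / 4 - (3/2) * b := by linarith
    exact mul_nonneg (mul_nonneg (mul_nonneg (mul_nonneg (mul_nonneg hd.le hVt) hE.le)
      (inv_nonneg.2 hP.le)) (inv_nonneg.2 hcs.le)) h9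
  -- monotonicity step: replace ‖V s‖ by ‖V t‖
  have hstep1 : (∫ s in (0:ℝ)..t, Real.exp (s / 2) * (b * d / (c + s) ^ (b + 1)) * ‖V s‖)
      ≤ ∫ s in (0:ℝ)..t, G s := by
    rw [intervalIntegral.integral_of_le ht, intervalIntegral.integral_of_le ht]
    apply MeasureTheory.integral_mono_of_nonneg
    · filter_upwards [MeasureTheory.ae_restrict_mem measurableSet_Ioc] with s hs
      have hcs : (0:ℝ) < c + s := by have := hs.1; linarith
      have : 0 < (c + s) ^ (b + 1) := Real.rpow_pos_of_pos hcs _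
      positivity
    · exact hintG.1
    · filter_upwards [MeasureTheory.ae_restrict_mem measurableSet_Ioc] with s hs
      have hcs : (0:ℝ) < c + s := by have := hs.1; linarith
      have h1 : ‖V s‖ ≤ ‖V t‖ := hmono s hs.1.le hs.2
      have : 0 < (c + s) ^ (b + 1) := Real.rpow_pos_of_pos hcs _
      have hE : 0 < Real.exp (s / 2) := Real.exp_pos _
      apply mul_le_mul_of_nonneg_left h1
      positivity
  -- bound ∫ G
  have hstep2 : (∫ s in (0:ℝ)..t, G s) ≤ d * ‖V t‖ * ((1/2) * (g t - g 0)) := by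
    have hint2 : IntervalIntegrable (fun s => d * ‖V t‖ * ((1/2) * g' s))
        MeasureTheory.volume 0 t := (hintg'.const_mul _).const_mul _
    have hmono2 := intervalIntegral.integral_mono_on ht hintG hint2 hptw
    rw [intervalIntegral.integral_const_mul, intervalIntegral.integral_const_mul,
      hftc] at hmono2
    exact hmono2
  -- conclude
  have hg0 : 0 ≤ g 0 := by
    have : (0:ℝ) < c + 0 := by linarith
    have := Real.rpow_pos_of_pos this (-b)
    simp only [hg]
    positivity
  have hgt : g t = Real.exp (t / 2) * ((c + t) ^ b)⁻¹ := by
    simp only [hg, Real.rpow_neg hct.le]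
  have hKnn : 0 ≤ ‖V t‖ := norm_nonneg _
  have hchain : (∫ s in (0:ℝ)..t, Real.exp (s / 2) * (b * d / (c + s) ^ (b + 1)) * ‖V s‖)
      ≤ d * ‖V t‖ * ((1/2) * g t) := by
    refine (hstep1.trans hstep2).trans ?_
    nlinarith [hg0, mul_nonneg (mul_nonneg hd.le hKnn) hg0]
  have hE : (0:ℝ) ≤ Real.exp (-t / 2) := (Real.exp_pos _).le
  calc Real.exp (-t / 2) *
        (∫ s in (0:ℝ)..t, Real.exp (s / 2) * (b * d / (c + s) ^ (b + 1)) * ‖V s‖)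
      ≤ Real.exp (-t / 2) * (d * ‖V t‖ * ((1/2) * g t)) :=
        mul_le_mul_of_nonneg_left hchain hE
    _ = 1 / 2 * (d / (c + t) ^ b) * ‖V t‖ := by
        rw [hgt]
        have hee : Real.exp (-t / 2) * Real.exp (t / 2) = 1 := by
          have h0 : -t / 2 + t / 2 = 0 := by ring
          rw [← Real.exp_add, h0, Real.exp_zero]
        calc Real.exp (-t / 2) * (d * ‖V t‖ * (1 / 2 * (Real.exp (t / 2) * ((c + t) ^ b)⁻¹)))
            = (Real.exp (-t / 2) * Real.exp (t / 2)) *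
              (d * ‖V t‖ * (1 / 2 * ((c + t) ^ b)⁻¹)) := by ring
          _ = 1 / 2 * (d / (c + t) ^ b) * ‖V t‖ := by rw [hee, div_eq_mul_inv]; ring
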